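/- With notation as above, if F arises from H via F(w_1,w_2,w_3) = H((w_1−w_2)/(1−w_2), w_3(1−w_2)/(1−w_3))/((1−w_2)(1−w_3)), then for each S ≥ 0 the matrix R_S = (R_S(a,b))_{0≤a,b≤S} with R_S(a,b) = [w_1^a w_2^{S−a} w_3^b]F has eigenvalues exactly e_0, e_1, …, e_S (with multiplicity), where e_n = [x^n y^n]H; in particular R_S is conjugate to the triangular matrix with (a,b)-entry C(a,b)·h_{ab}. -/

import Mathlib

open MvPowerSeries

/-- Formal partial derivative of a power series in three variables. -/
noncomputable def pderiv3 (i : Fin 3) (F : MvPowerSeries (Fin 3) ℂ) :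
    MvPowerSeries (Fin 3) ℂ :=
  fun m => ((m i : ℂ) + 1) * coeff (R := ℂ) (m + Finsupp.single i 1) F

/-- Composition `H(f,g)` of a two-variable power series `H` with two three-variable power
series `f`, `g` (intended for `f`, `g` with zero constant term, in which case the coefficient
of a monomial `m` only receives contributions from `f^i g^j` with `i + j ≤ deg m`). -/
noncomputable def comp2 (H : MvPowerSeries (Fin 2) ℂ) (f g : MvPowerSeries (Fin 3) ℂ) :
    MvPowerSeries (Fin 3) ℂ :=
  fun m =>
    ∑ p ∈ Finset.range (m.sum (fun _ e => e) + 1) ×ˢ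
        Finset.range (m.sum (fun _ e => e) + 1),
      coeff (R := ℂ) (Finsupp.single 0 p.1 + Finsupp.single 1 p.2) H *
        coeff (R := ℂ) m (f ^ p.1 * g ^ p.2)

/-- The power series `(w₁ - w₂)/(1 - w₂)`. -/
noncomputable def subx : MvPowerSeries (Fin 3) ℂ := (X 0 - X 1) * (1 - X 1)⁻¹

/-- The power series `w₃(1 - w₂)/(1 - w₃)`. -/
noncomputable def suby : MvPowerSeries (Fin 3) ℂ := X 2 * (1 - X 1) * (1 - X 2)⁻¹

/-- `F(w₁,w₂,w₃) = H((w₁-w₂)/(1-w₂), w₃(1-w₂)/(1-w₃)) / ((1-w₂)(1-w₃))`. -/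
noncomputable def FofH (H : MvPowerSeries (Fin 2) ℂ) : MvPowerSeries (Fin 3) ℂ :=
  ((1 - X 1) * (1 - X 2))⁻¹ * comp2 H subx suby

/-- The coefficient `h_{ij}` of `H`. -/
noncomputable def hcoeff (H : MvPowerSeries (Fin 2) ℂ) (i j : ℕ) : ℂ :=
  coeff (R := ℂ) (Finsupp.single 0 i + Finsupp.single 1 j) H

/-- The `(S+1)×(S+1)` matrix `R_S` with entries `R_S(a,b) = [w₁^a w₂^{S-a} w₃^b] F`. -/
noncomputable def RSmat (H : MvPowerSeries (Fin 2) ℂ) (S : ℕ) :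
    Matrix (Fin (S + 1)) (Fin (S + 1)) ℂ :=
  fun a b =>
    coeff (R := ℂ) (Finsupp.single 0 (a : ℕ) + Finsupp.single 1 (S - (a : ℕ)) +
      Finsupp.single 2 (b : ℕ)) (FofH H)


section Aux
open Finsupp
noncomputable def G (k : Fin 3) : MvPowerSeries (Fin 3) ℂ :=
  fun m => if ∀ l, l ≠ k → m l = 0 then 1 else 0

lemma coeff_G (k : Fin 3) (m : Fin 3 →₀ ℕ) :
    coeff (R := ℂ) m (G k) = if ∀ l, l ≠ k → m l = 0 then 1 else 0 := rfl

lemma one_sub_X_mul_G (k : Fin 3) : (1 - X k) * G k = 1 := by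
  ext m
  rw [sub_mul, one_mul, map_sub, X, coeff_monomial_mul, coeff_one]
  simp only [coeff_G]
  by_cases h : ∀ l, l ≠ k → m l = 0
  · by_cases hk : m k = 0
    · have hm0 : m = 0 := by
        ext l; by_cases hl : l = k
        · simp [hl, hk]
        · simp [h l hl]
      rw [if_pos h, if_neg, if_pos hm0]
      · ring
      · rw [Finsupp.single_le_iff, hm0]; simp
    · have hle : Finsupp.single k 1 ≤ m := by
        rw [Finsupp.single_le_iff]; omega
      rw [if_pos h, if_pos hle, if_pos, if_neg]
      · ring
      · intro h0; rw [h0] at hk; simp at hk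
      · intro l hl; rw [Finsupp.tsub_apply]; simp [h l hl]
  · have hm0 : m ≠ 0 := by
      intro h0; apply h; intro l _; rw [h0]; rfl
    rw [if_neg h, if_neg hm0]
    by_cases hle : Finsupp.single k 1 ≤ m
    · rw [if_pos hle, if_neg]
      · ring
      · intro h2; apply h; intro l hl
        have := h2 l hl
        rw [Finsupp.tsub_apply, Finsupp.single_apply, if_neg (by exact fun e => hl e.symm)] at this
        simpa using this
    · rw [if_neg hle]; ring

lemma coeff_G_pow (k : Fin 3) (n : ℕ) (m : Fin 3 →₀ ℕ) :
    coeff (R := ℂ) m (G k ^ (n + 1)) =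
      if ∀ l, l ≠ k → m l = 0 then ((m k + n).choose n : ℂ) else 0 := by
  induction n generalizing m with
  | zero => simp [coeff_G]
  | succ n ih =>
    rw [pow_succ, mul_comm, coeff_mul]
    by_cases h : ∀ l, l ≠ k → m l = 0
    · have hm : m = Finsupp.single k (m k) := by
        ext l; by_cases hl : l = k
        · subst hl; simp
        · rw [Finsupp.single_apply, if_neg (fun e => hl e.symm), h l hl]
      rw [if_pos h]
      conv_lhs => rw [hm]
      rw [Finsupp.antidiagonal_single, Finset.sum_map]
      simp only [Function.Embedding.coe_prodMap, Function.Embedding.coeFn_mk, Prod.map_apply,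
        Prod.map_fst, Prod.map_snd]
      have : ∀ p ∈ Finset.HasAntidiagonal.antidiagonal (m k),
          coeff (R := ℂ) (Finsupp.single k p.1) (G k) *
            coeff (R := ℂ) (Finsupp.single k p.2) (G k ^ (n + 1)) =
          ((p.2 + n).choose n : ℂ) := by
        intro p _
        rw [coeff_G, ih, if_pos, if_pos, one_mul, Finsupp.single_eq_same]
        all_goals intro l hl; rw [Finsupp.single_apply, if_neg (fun e => hl e.symm)]
      rw [Finset.sum_congr rfl this,
        Finset.Nat.sum_antidiagonal_eq_sum_range_succ (fun x y => ((y + n).choose n : ℂ))]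
      rw [← Nat.cast_sum]
      norm_cast
      rw [show (∑ i ∈ Finset.range (m k + 1), (m k - i + n).choose n) =
          ∑ i ∈ Finset.range (m k + 1), (fun t => (t + n).choose n) (m k + 1 - 1 - i) by
        apply Finset.sum_congr rfl; intro i hi; simp,
        Finset.sum_range_reflect (fun t => (t + n).choose n) (m k + 1),
        Nat.sum_range_add_choose, add_assoc]
    · rw [if_neg h]
      apply Finset.sum_eq_zero
      intro p hp
      rw [Finset.HasAntidiagonal.mem_antidiagonal] at hp
      push_neg at h
      obtain ⟨l, hl, hml⟩ := h
      have : p.1 l ≠ 0 ∨ p.2 l ≠ 0 := by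
        by_contra hc; push_neg at hc
        apply hml; rw [← hp]; simp [Finsupp.add_apply, hc.1, hc.2]
      rcases this with h1 | h1
      · rw [coeff_G, if_neg (fun hh => h1 (hh l hl)), zero_mul]
      · rw [ih, if_neg (fun hh => h1 (hh l hl)), mul_zero]

lemma constCoeff_one_sub_X (k : Fin 3) :
    constantCoeff (σ := Fin 3) (R := ℂ) (1 - X k) ≠ 0 := by
  simp

lemma inv_one_sub_X (k : Fin 3) : (1 - X k : MvPowerSeries (Fin 3) ℂ)⁻¹ = G k := by
  rw [MvPowerSeries.inv_eq_iff_mul_eq_one (constCoeff_one_sub_X k), mul_comm]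
  exact one_sub_X_mul_G k

lemma inv_one_sub_X_mul :
    ((1 - X 1) * (1 - X 2) : MvPowerSeries (Fin 3) ℂ)⁻¹ = G 1 * G 2 := by
  rw [MvPowerSeries.inv_eq_iff_mul_eq_one]
  · rw [mul_mul_mul_comm, mul_comm (G 1), mul_comm (G 2), one_sub_X_mul_G, one_sub_X_mul_G,
      one_mul]
  · rw [map_mul]
    simp

def wt (m : Fin 3 →₀ ℕ) : ℕ := m.sum fun _ e => e

lemma wt_add (m n : Fin 3 →₀ ℕ) : wt (m + n) = wt m + wt n := by
  unfold wt
  exact Finsupp.sum_add_index' (fun _ => rfl) (fun _ _ _ => rfl)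

lemma wt_eq_zero_iff (m : Fin 3 →₀ ℕ) : wt m = 0 ↔ m = 0 := by
  unfold wt
  rw [Finsupp.sum, Finset.sum_eq_zero_iff]
  constructor
  · intro h; ext l
    by_cases hl : l ∈ m.support
    · exact h l hl
    · simpa using Finsupp.notMem_support_iff.mp hl
  · intro h; subst h; simp

lemma coeff_pow_eq_zero {f : MvPowerSeries (Fin 3) ℂ}
    (hf : constantCoeff (σ := Fin 3) (R := ℂ) f = 0) :
    ∀ n (m : Fin 3 →₀ ℕ), wt m < n → coeff (R := ℂ) m (f ^ n) = 0 := by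
  intro n
  induction n with
  | zero => omega
  | succ n ih =>
    intro m hm
    rw [pow_succ, mul_comm, coeff_mul]
    apply Finset.sum_eq_zero
    intro p hp
    rw [Finset.HasAntidiagonal.mem_antidiagonal] at hp
    by_cases h1 : p.1 = 0
    · rw [h1]
      have : coeff (R := ℂ) (0 : Fin 3 →₀ ℕ) f = 0 := hf
      rw [this, zero_mul]
    · have : wt p.2 < n := by
        have := wt_add p.1 p.2
        rw [hp] at this
        have h2 : wt p.1 ≠ 0 := fun h => h1 ((wt_eq_zero_iff p.1).mp h)
        omega
      rw [ih p.2 this, mul_zero]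

lemma coeff_pow_mul_pow_eq_zero {f g : MvPowerSeries (Fin 3) ℂ}
    (hf : constantCoeff (σ := Fin 3) (R := ℂ) f = 0) (hg : constantCoeff (σ := Fin 3) (R := ℂ) g = 0)
    {i j : ℕ} {m : Fin 3 →₀ ℕ} (hm : wt m < i + j) :
    coeff (R := ℂ) m (f ^ i * g ^ j) = 0 := by
  rw [coeff_mul]
  apply Finset.sum_eq_zero
  intro p hp
  rw [Finset.HasAntidiagonal.mem_antidiagonal] at hp
  have hw := wt_add p.1 p.2
  rw [hp] at hw
  by_cases h1 : wt p.1 < i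
  · rw [coeff_pow_eq_zero hf i p.1 h1, zero_mul]
  · rw [coeff_pow_eq_zero hg j p.2 (by omega), mul_zero]

lemma subx_eq : subx = (X 0 - X 1) * G 1 := by rw [subx, inv_one_sub_X]
lemma suby_eq : suby = X 2 * (1 - X 1) * G 2 := by rw [suby, inv_one_sub_X]

lemma constCoeff_subx : constantCoeff (σ := Fin 3) (R := ℂ) subx = 0 := by
  rw [subx_eq, map_mul, map_sub]
  simp

lemma constCoeff_suby : constantCoeff (σ := Fin 3) (R := ℂ) suby = 0 := by
  rw [suby_eq, map_mul, map_mul]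
  simp

noncomputable def mof (a c b : ℕ) : Fin 3 →₀ ℕ :=
  Finsupp.single 0 a + Finsupp.single 1 c + Finsupp.single 2 b

lemma mof_apply0 (a c b : ℕ) : mof a c b 0 = a := by simp [mof]
lemma mof_apply1 (a c b : ℕ) : mof a c b 1 = c := by
  simp [mof, Finsupp.single_apply]
lemma mof_apply2 (a c b : ℕ) : mof a c b 2 = b := by
  simp [mof, Finsupp.single_apply]

lemma wt_single (k : Fin 3) (n : ℕ) : wt (Finsupp.single k n) = n := by
  unfold wt; simp

lemma wt_mof (a c b : ℕ) : wt (mof a c b) = a + c + b := by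
  unfold mof; rw [wt_add, wt_add, wt_single, wt_single, wt_single]

lemma one_sub_pow_c (x : MvPowerSeries (Fin 3) ℂ) (j : ℕ) :
    (1 - x) ^ j = ∑ t ∈ Finset.range (j + 1),
      ((-1 : ℂ) ^ t * (j.choose t : ℂ)) • x ^ t := by
  rw [sub_pow]
  have : ∀ m ∈ Finset.range (j + 1),
      (-1 : MvPowerSeries (Fin 3) ℂ) ^ (m + j) * 1 ^ m * x ^ (j - m) * (j.choose m : _) =
      (fun t => ((-1 : ℂ) ^ t * (j.choose (j - t) : ℂ)) • x ^ t) (j - m) := by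
    intro m hm
    rw [Finset.mem_range] at hm
    have h1 : (-1 : MvPowerSeries (Fin 3) ℂ) ^ (m + j) = ((-1 : ℂ) ^ (j - m)) • 1 := by
      rw [show m + j = (j - m) + 2 * m by omega, pow_add, pow_mul, neg_one_sq, one_pow, mul_one]
      rw [smul_eq_C_mul, mul_one, map_pow, map_neg, map_one]
    rw [h1]
    show _ = ((-1 : ℂ) ^ (j - m) * (j.choose (j - (j - m)) : ℂ)) • x ^ (j - m)
    have h2 : j - (j - m) = m := by omega
    rw [h2]
    rw [smul_mul_assoc, smul_mul_assoc, smul_mul_assoc, one_mul, one_pow, one_mul]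
    rw [smul_eq_C_mul, smul_eq_C_mul, map_mul, map_pow, map_neg, map_one, map_natCast]
    ring
  rw [Finset.sum_congr rfl this]
  have h3 := Finset.sum_range_reflect
    (fun t => ((-1 : ℂ) ^ t * (j.choose (j - t) : ℂ)) • x ^ t) (j + 1)
  simp only [Nat.add_sub_cancel] at h3
  rw [h3]
  apply Finset.sum_congr rfl
  intro t ht
  rw [Finset.mem_range] at ht
  rw [Nat.choose_symm (by omega)]

lemma XsubX_pow (i : ℕ) :
    (X 0 - X 1 : MvPowerSeries (Fin 3) ℂ) ^ i = ∑ u ∈ Finset.range (i + 1),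
      ((-1 : ℂ) ^ (u + i) * (i.choose u : ℂ)) •
        monomial (R := ℂ) (Finsupp.single 0 u + Finsupp.single 1 (i - u)) 1 := by
  rw [sub_pow]
  apply Finset.sum_congr rfl
  intro u hu
  rw [X_pow_eq, X_pow_eq, mul_assoc ((-1 : MvPowerSeries (Fin 3) ℂ) ^ (u + i)),
    monomial_mul_monomial, one_mul]
  have h1 : (-1 : MvPowerSeries (Fin 3) ℂ) ^ (u + i) = ((-1 : ℂ) ^ (u + i)) • 1 := by
    rw [smul_eq_C_mul, mul_one, map_pow, map_neg, map_one]
  rw [h1, smul_mul_assoc, smul_mul_assoc, one_mul]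
  rw [smul_eq_C_mul, smul_eq_C_mul, map_mul, map_pow, map_neg, map_one, map_natCast]
  ring

lemma sub_single_cond (m : Fin 3 →₀ ℕ) (k : Fin 3) (t : ℕ) (l : Fin 3) (hl : l ≠ k) :
    (m - Finsupp.single k t) l = m l := by
  rw [Finsupp.tsub_apply, Finsupp.single_apply, if_neg (fun e => hl e.symm)]
  simp

lemma Qcoeff (i j : ℕ) (m : Fin 3 →₀ ℕ) :
    coeff (R := ℂ) m ((1 - X 1) ^ j * G 1 ^ (i + 1)) =
    if m 0 = 0 ∧ m 2 = 0 then
      ∑ t ∈ Finset.range (j + 1), (-1 : ℂ) ^ t * (j.choose t : ℂ) *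
        (if t ≤ m 1 then ((m 1 - t + i).choose i : ℂ) else 0)
    else 0 := by
  rw [one_sub_pow_c, Finset.sum_mul, map_sum]
  have key : ∀ t ∈ Finset.range (j + 1),
      coeff (R := ℂ) m ((((-1 : ℂ) ^ t * (j.choose t : ℂ)) • X 1 ^ t) * G 1 ^ (i + 1)) =
      (-1 : ℂ) ^ t * (j.choose t : ℂ) *
        (if m 0 = 0 ∧ m 2 = 0 then
          (if t ≤ m 1 then ((m 1 - t + i).choose i : ℂ) else 0) else 0) := by
    intro t _
    rw [smul_mul_assoc, coeff_smul, X_pow_eq, coeff_monomial_mul]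
    congr 1
    by_cases hle : Finsupp.single 1 t ≤ m
    · have ht : t ≤ m 1 := by
        have := hle 1; simpa using this
      rw [if_pos hle, one_mul, coeff_G_pow]
      have hc : (∀ l : Fin 3, l ≠ 1 → ((m - Finsupp.single 1 t : Fin 3 →₀ ℕ)) l = 0) ↔ (m 0 = 0 ∧ m 2 = 0) := by
        constructor
        · intro h
          exact ⟨by rw [← sub_single_cond m 1 t 0 (by decide)]; exact h 0 (by decide),
            by rw [← sub_single_cond m 1 t 2 (by decide)]; exact h 2 (by decide)⟩
        · rintro ⟨h0, h2⟩ l hl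
          fin_cases l
          · exact (sub_single_cond m 1 t 0 (by decide)).trans h0
          · simp at hl
          · exact (sub_single_cond m 1 t 2 (by decide)).trans h2
      have hv : ((m - Finsupp.single 1 t : Fin 3 →₀ ℕ)) 1 = m 1 - t := by
        rw [Finsupp.tsub_apply, Finsupp.single_eq_same]
      rw [hv]
      by_cases h : m 0 = 0 ∧ m 2 = 0
      · rw [if_pos (hc.mpr h), if_pos h, if_pos ht]
      · rw [if_neg (fun hh => h (hc.mp hh)), if_neg h]
    · have ht : ¬ t ≤ m 1 := by
        intro hcon
        exact hle (by rw [Finsupp.single_le_iff]; exact hcon)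
      rw [if_neg hle]
      by_cases h : m 0 = 0 ∧ m 2 = 0
      · rw [if_pos h, if_neg ht]
      · rw [if_neg h]
  rw [Finset.sum_congr rfl key]
  by_cases h : m 0 = 0 ∧ m 2 = 0
  · rw [if_pos h]
    apply Finset.sum_congr rfl
    intro t _
    rw [if_pos h]
  · rw [if_neg h]
    apply Finset.sum_eq_zero
    intro t _
    rw [if_neg h, mul_zero]

lemma Vcoeff (j : ℕ) (m : Fin 3 →₀ ℕ) :
    coeff (R := ℂ) m (X 2 ^ j * G 2 ^ (j + 1)) =
    if m 0 = 0 ∧ m 1 = 0 then ((m 2).choose j : ℂ) else 0 := by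
  rw [X_pow_eq, coeff_monomial_mul]
  have hc : (∀ l : Fin 3, l ≠ 2 → ((m - Finsupp.single 2 j : Fin 3 →₀ ℕ)) l = 0) ↔ (m 0 = 0 ∧ m 1 = 0) := by
    constructor
    · intro h
      exact ⟨by rw [← sub_single_cond m 2 j 0 (by decide)]; exact h 0 (by decide),
        by rw [← sub_single_cond m 2 j 1 (by decide)]; exact h 1 (by decide)⟩
    · rintro ⟨h0, h1⟩ l hl
      fin_cases l
      · exact (sub_single_cond m 2 j 0 (by decide)).trans h0
      · exact (sub_single_cond m 2 j 1 (by decide)).trans h1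
      · simp at hl
  by_cases hle : Finsupp.single 2 j ≤ m
  · have hj : j ≤ m 2 := by have := hle 2; simpa using this
    rw [if_pos hle, one_mul, coeff_G_pow]
    have hv : ((m - Finsupp.single 2 j : Fin 3 →₀ ℕ)) 2 = m 2 - j := by
      rw [Finsupp.tsub_apply, Finsupp.single_eq_same]
    rw [hv]
    by_cases h : m 0 = 0 ∧ m 1 = 0
    · rw [if_pos (hc.mpr h), if_pos h]
      congr 2
      omega
    · rw [if_neg (fun hh => h (hc.mp hh)), if_neg h]
  · have hj : m 2 < j := by
      by_contra hcon
      exact hle (by rw [Finsupp.single_le_iff]; omega)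
    rw [if_neg hle]
    by_cases h : m 0 = 0 ∧ m 1 = 0
    · rw [if_pos h, Nat.choose_eq_zero_of_lt hj, Nat.cast_zero]
    · rw [if_neg h]

noncomputable def Wval (i j a c : ℕ) : ℂ :=
  ∑ t ∈ Finset.range (j + 1), (-1 : ℂ) ^ t * (j.choose t : ℂ) *
    (if a ≤ i ∧ i - a + t ≤ c then ((c - (i - a + t) + i).choose i : ℂ) else 0)

lemma mu_apply0 (u v : ℕ) :
    (Finsupp.single 0 u + Finsupp.single 1 v : Fin 3 →₀ ℕ) 0 = u := by
  simp [Finsupp.single_apply]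

lemma mu_apply1 (u v : ℕ) :
    (Finsupp.single 0 u + Finsupp.single 1 v : Fin 3 →₀ ℕ) 1 = v := by
  simp [Finsupp.single_apply]

lemma mu_apply2 (u v : ℕ) :
    (Finsupp.single 0 u + Finsupp.single 1 v : Fin 3 →₀ ℕ) 2 = 0 := by
  simp [Finsupp.single_apply]

lemma mu_le_iff (u v : ℕ) (m : Fin 3 →₀ ℕ) :
    (Finsupp.single 0 u + Finsupp.single 1 v : Fin 3 →₀ ℕ) ≤ m ↔ u ≤ m 0 ∧ v ≤ m 1 := by
  rw [Finsupp.le_def]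
  constructor
  · intro h
    exact ⟨by have := h 0; rwa [mu_apply0] at this, by have := h 1; rwa [mu_apply1] at this⟩
  · rintro ⟨h0, h1⟩ l
    fin_cases l
    · exact le_trans (le_of_eq (mu_apply0 u v)) h0
    · exact le_trans (le_of_eq (mu_apply1 u v)) h1
    · exact le_trans (le_of_eq (mu_apply2 u v)) (Nat.zero_le _)

lemma Wcoeff (i j : ℕ) (m : Fin 3 →₀ ℕ) :
    coeff (R := ℂ) m ((X 0 - X 1) ^ i * ((1 - X 1) ^ j * G 1 ^ (i + 1))) =
    if m 2 = 0 then
      (-1 : ℂ) ^ (i + m 0) * (i.choose (m 0) : ℂ) * Wval i j (m 0) (m 1)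
    else 0 := by
  rw [XsubX_pow, Finset.sum_mul, map_sum]
  have key : ∀ u ∈ Finset.range (i + 1),
      coeff (R := ℂ) m ((((-1 : ℂ) ^ (u + i) * (i.choose u : ℂ)) •
          monomial (R := ℂ) (Finsupp.single 0 u + Finsupp.single 1 (i - u)) 1) *
          ((1 - X 1) ^ j * G 1 ^ (i + 1))) =
      (-1 : ℂ) ^ (u + i) * (i.choose u : ℂ) *
        (if u ≤ m 0 ∧ i - u ≤ m 1 then
          (if m 0 - u = 0 ∧ m 2 = 0 then
            ∑ t ∈ Finset.range (j + 1), (-1 : ℂ) ^ t * (j.choose t : ℂ) *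
              (if t ≤ m 1 - (i - u) then ((m 1 - (i - u) - t + i).choose i : ℂ) else 0)
          else 0) else 0) := by
    intro u _
    rw [smul_mul_assoc, coeff_smul, coeff_monomial_mul]
    congr 1
    by_cases hle : (Finsupp.single 0 u + Finsupp.single 1 (i - u) : Fin 3 →₀ ℕ) ≤ m
    · rw [if_pos hle, if_pos ((mu_le_iff u (i - u) m).mp hle), one_mul, Qcoeff]
      have e0 : ((m - (Finsupp.single 0 u + Finsupp.single 1 (i - u)) : Fin 3 →₀ ℕ)) 0
          = m 0 - u := by
        rw [Finsupp.tsub_apply, mu_apply0]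
      have e1 : ((m - (Finsupp.single 0 u + Finsupp.single 1 (i - u)) : Fin 3 →₀ ℕ)) 1
          = m 1 - (i - u) := by
        rw [Finsupp.tsub_apply, mu_apply1]
      have e2 : ((m - (Finsupp.single 0 u + Finsupp.single 1 (i - u)) : Fin 3 →₀ ℕ)) 2
          = m 2 := by
        rw [Finsupp.tsub_apply, mu_apply2]; omega
      rw [e0, e1, e2]
    · rw [if_neg hle, if_neg (fun h => hle ((mu_le_iff u (i - u) m).mpr h))]
  rw [Finset.sum_congr rfl key]
  by_cases h2 : m 2 = 0
  · rw [if_pos h2]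
    by_cases h0 : m 0 ≤ i
    · rw [Finset.sum_eq_single (m 0)]
      · by_cases hc : i - m 0 ≤ m 1
        · rw [if_pos ⟨le_refl _, hc⟩, if_pos ⟨by omega, h2⟩]
          congr 1
          · rw [Nat.add_comm (m 0) i]
          unfold Wval
          apply Finset.sum_congr rfl
          intro t _
          congr 1
          by_cases ht : t ≤ m 1 - (i - m 0)
          · rw [if_pos ht, if_pos ⟨h0, by omega⟩]
            congr 2
            omega
          · rw [if_neg ht, if_neg (by omega)]
        · rw [if_neg (by omega)]
          have hwv : Wval i j (m 0) (m 1) = 0 := by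
            unfold Wval
            apply Finset.sum_eq_zero
            intro t _
            rw [if_neg (by omega), mul_zero]
          rw [hwv]
          simp

      · intro u _ hu
        by_cases hul : u ≤ m 0
        · have : ¬ (m 0 - u = 0 ∧ m 2 = 0) := by
            intro hh
            omega
          rw [if_neg this]
          by_cases hg : u ≤ m 0 ∧ i - u ≤ m 1
          · rw [if_pos hg, mul_zero]
          · rw [if_neg hg, mul_zero]
        · rw [if_neg (fun hh => hul hh.1), mul_zero]
      · intro hm
        rw [Finset.mem_range] at hm
        omega
    · rw [Nat.choose_eq_zero_of_lt (by omega), Nat.cast_zero, mul_zero, zero_mul]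
      apply Finset.sum_eq_zero
      intro u hu
      rw [Finset.mem_range] at hu
      have : ¬ (m 0 - u = 0 ∧ m 2 = 0) := by
        intro hh
        omega
      rw [if_neg this]
      by_cases hg : u ≤ m 0 ∧ i - u ≤ m 1
      · rw [if_pos hg, mul_zero]
      · rw [if_neg hg, mul_zero]
  · rw [if_neg h2]
    apply Finset.sum_eq_zero
    intro u _
    rw [if_neg (fun hh : _ ∧ _ => h2 hh.2)]
    by_cases hg : u ≤ m 0 ∧ i - u ≤ m 1
    · rw [if_pos hg, mul_zero]
    · rw [if_neg hg, mul_zero]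

lemma eq_mof (p : Fin 3 →₀ ℕ) : p = mof (p 0) (p 1) (p 2) := by
  ext l
  fin_cases l
  · exact (mof_apply0 _ _ _).symm
  · exact (mof_apply1 _ _ _).symm
  · exact (mof_apply2 _ _ _).symm

lemma mof_zero_add_single (a c b : ℕ) :
    mof a c 0 + Finsupp.single 2 b = mof a c b := by
  unfold mof
  rw [Finsupp.single_zero, add_zero, add_assoc]

lemma mof_single2 (b : ℕ) : mof 0 0 b = Finsupp.single 2 b := by
  unfold mof
  rw [Finsupp.single_zero, Finsupp.single_zero, add_zero, zero_add]

lemma coeff_mul_disjoint (f g : MvPowerSeries (Fin 3) ℂ)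
    (hf : ∀ m : Fin 3 →₀ ℕ, m 2 ≠ 0 → coeff (R := ℂ) m f = 0)
    (hg : ∀ m : Fin 3 →₀ ℕ, ¬ (m 0 = 0 ∧ m 1 = 0) → coeff (R := ℂ) m g = 0)
    (a c b : ℕ) :
    coeff (R := ℂ) (mof a c b) (f * g) =
      coeff (R := ℂ) (mof a c 0) f * coeff (R := ℂ) (Finsupp.single 2 b) g := by
  rw [coeff_mul]
  apply Finset.sum_eq_single (mof a c 0, Finsupp.single 2 b)
  · intro p hp hne
    rw [Finset.HasAntidiagonal.mem_antidiagonal] at hp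
    have hcomp : ∀ l : Fin 3, p.1 l + p.2 l = mof a c b l := by
      intro l
      have := DFunLike.congr_fun hp l
      rwa [Finsupp.add_apply] at this
    have h0 := hcomp 0; have h1 := hcomp 1; have h2 := hcomp 2
    rw [mof_apply0] at h0; rw [mof_apply1] at h1; rw [mof_apply2] at h2
    by_cases hc1 : p.1 2 = 0
    · by_cases hc2 : p.2 0 = 0 ∧ p.2 1 = 0
      · exfalso
        apply hne
        have e10 : p.1 0 = a := by omega
        have e11 : p.1 1 = c := by omega
        have e1 : p.1 = mof a c 0 := by
          rw [eq_mof p.1, e10, e11, hc1]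
        have e22 : p.2 2 = b := by omega
        have e2 : p.2 = Finsupp.single 2 b := by
          rw [eq_mof p.2, hc2.1, hc2.2, e22, mof_single2]
        exact Prod.ext e1 e2
      · rw [hg p.2 hc2, mul_zero]
    · rw [hf p.1 hc1, zero_mul]
  · intro hmem
    exfalso
    exact hmem (Finset.HasAntidiagonal.mem_antidiagonal.mpr (mof_zero_add_single a c b))

noncomputable def Kc (S i j : ℕ) : ℂ :=
  ∑ t ∈ Finset.range (j + 1), (-1 : ℂ) ^ t * (j.choose t : ℂ) * ((S - t).choose i : ℂ)

lemma CWvalKc (i j a c : ℕ) (hj : j ≤ a + c) :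
    (i.choose a : ℂ) * Wval i j a c = (i.choose a : ℂ) * Kc (a + c) i j := by
  by_cases ha : a ≤ i
  · congr 1
    unfold Wval Kc
    apply Finset.sum_congr rfl
    intro t ht
    rw [Finset.mem_range] at ht
    congr 1
    by_cases hg : i - a + t ≤ c
    · rw [if_pos ⟨ha, hg⟩]
      congr 2
      omega
    · rw [if_neg (fun hh => hg hh.2), Nat.choose_eq_zero_of_lt (by omega), Nat.cast_zero]
  · rw [Nat.choose_eq_zero_of_lt (by omega), Nat.cast_zero, zero_mul, zero_mul]

lemma s2_apply0 (b : ℕ) : (Finsupp.single 2 b : Fin 3 →₀ ℕ) 0 = 0 := by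
  simp [Finsupp.single_apply]
lemma s2_apply1 (b : ℕ) : (Finsupp.single 2 b : Fin 3 →₀ ℕ) 1 = 0 := by
  simp [Finsupp.single_apply]
lemma s2_apply2 (b : ℕ) : (Finsupp.single 2 b : Fin 3 →₀ ℕ) 2 = b := by
  simp

lemma Zcoeff (i j a c b : ℕ) (hb : b ≤ a + c) :
    coeff (R := ℂ) (mof a c b) (G 1 * G 2 * (subx ^ i * suby ^ j)) =
      (-1 : ℂ) ^ (i + a) * (i.choose a : ℂ) * Kc (a + c) i j * (b.choose j : ℂ) := by
  have hring : G 1 * G 2 * (subx ^ i * suby ^ j) =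
      ((X 0 - X 1) ^ i * ((1 - X 1) ^ j * G 1 ^ (i + 1))) * (X 2 ^ j * G 2 ^ (j + 1)) := by
    rw [subx_eq, suby_eq, mul_pow, mul_pow, mul_pow]
    ring
  rw [hring, coeff_mul_disjoint _ _
    (fun m hm => by rw [Wcoeff, if_neg hm])
    (fun m hm => by rw [Vcoeff, if_neg hm]) a c b]
  rw [Wcoeff, Vcoeff, mof_apply0, mof_apply1, mof_apply2, s2_apply0, s2_apply1, s2_apply2]
  rw [if_pos rfl, if_pos ⟨rfl, rfl⟩]
  by_cases hj : j ≤ a + c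
  · rw [mul_assoc ((-1 : ℂ) ^ (i + a)), CWvalKc i j a c hj, ← mul_assoc]
  · rw [Nat.choose_eq_zero_of_lt (show b < j by omega), Nat.cast_zero, mul_zero, mul_zero]

lemma Kc_eq_zero (S i j : ℕ) (hi : S < i) : Kc S i j = 0 := by
  unfold Kc
  apply Finset.sum_eq_zero
  intro t _
  rw [Nat.choose_eq_zero_of_lt (show S - t < i by omega), Nat.cast_zero, mul_zero]

lemma Rentry (H : MvPowerSeries (Fin 2) ℂ) (S a b : ℕ) (ha : a ≤ S) (hb : b ≤ S) :
    coeff (R := ℂ) (mof a (S - a) b) (FofH H) =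
      ∑ i ∈ Finset.range (S + 1), ∑ j ∈ Finset.range (S + 1),
        ((-1 : ℂ) ^ (i + a) * (i.choose a : ℂ)) * (hcoeff H i j * Kc S i j) *
          (b.choose j : ℂ) := by
  have hS : a + (S - a) = S := by omega
  have hwtm : wt (mof a (S - a) b) = S + b := by rw [wt_mof]; omega
  rw [FofH, inv_one_sub_X_mul, coeff_mul]
  have step3 : ∀ p ∈ Finset.HasAntidiagonal.antidiagonal (mof a (S - a) b),
      coeff (R := ℂ) p.1 (G 1 * G 2) * coeff (R := ℂ) p.2 (comp2 H subx suby) =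
      ∑ q ∈ Finset.range (S + b + 1) ×ˢ Finset.range (S + b + 1),
        hcoeff H q.1 q.2 *
          (coeff (R := ℂ) p.1 (G 1 * G 2) * coeff (R := ℂ) p.2 (subx ^ q.1 * suby ^ q.2)) := by
    intro p hp
    rw [Finset.HasAntidiagonal.mem_antidiagonal] at hp
    have hwt2 : wt p.2 ≤ S + b := by
      have := wt_add p.1 p.2
      rw [hp, hwtm] at this
      omega
    have hc2 : coeff (R := ℂ) p.2 (comp2 H subx suby) =
        ∑ q ∈ Finset.range (wt p.2 + 1) ×ˢ Finset.range (wt p.2 + 1),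
          hcoeff H q.1 q.2 * coeff (R := ℂ) p.2 (subx ^ q.1 * suby ^ q.2) := rfl
    have hext : (∑ q ∈ Finset.range (wt p.2 + 1) ×ˢ Finset.range (wt p.2 + 1),
          hcoeff H q.1 q.2 * coeff (R := ℂ) p.2 (subx ^ q.1 * suby ^ q.2)) =
        ∑ q ∈ Finset.range (S + b + 1) ×ˢ Finset.range (S + b + 1),
          hcoeff H q.1 q.2 * coeff (R := ℂ) p.2 (subx ^ q.1 * suby ^ q.2) := by
      apply Finset.sum_subset
      · apply Finset.product_subset_product <;>
          exact Finset.range_subset_range.mpr (by omega)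
      · intro q hq hnq
        have hcon : wt p.2 < q.1 + q.2 := by
          rw [Finset.mem_product, Finset.mem_range, Finset.mem_range] at hq hnq
          omega
        rw [coeff_pow_mul_pow_eq_zero constCoeff_subx constCoeff_suby hcon, mul_zero]
    rw [hc2, hext, Finset.mul_sum]
    apply Finset.sum_congr rfl
    intro q _
    ring
  rw [Finset.sum_congr rfl step3, Finset.sum_comm]
  have step5 : ∀ q ∈ Finset.range (S + b + 1) ×ˢ Finset.range (S + b + 1),
      (∑ p ∈ Finset.HasAntidiagonal.antidiagonal (mof a (S - a) b),
        hcoeff H q.1 q.2 *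
          (coeff (R := ℂ) p.1 (G 1 * G 2) * coeff (R := ℂ) p.2 (subx ^ q.1 * suby ^ q.2))) =
      ((-1 : ℂ) ^ (q.1 + a) * ((q.1).choose a : ℂ)) * (hcoeff H q.1 q.2 * Kc S q.1 q.2) *
        (b.choose q.2 : ℂ) := by
    intro q _
    rw [← Finset.mul_sum, ← coeff_mul]
    have hz := Zcoeff q.1 q.2 a (S - a) b (by omega)
    rw [hS] at hz
    rw [hz]
    ring
  rw [Finset.sum_congr rfl step5, Finset.sum_product]
  have shrinkj : ∀ i ∈ Finset.range (S + b + 1),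
      (∑ j ∈ Finset.range (S + b + 1),
        ((-1 : ℂ) ^ (i + a) * (i.choose a : ℂ)) * (hcoeff H i j * Kc S i j) *
          (b.choose j : ℂ)) =
      ∑ j ∈ Finset.range (S + 1),
        ((-1 : ℂ) ^ (i + a) * (i.choose a : ℂ)) * (hcoeff H i j * Kc S i j) *
          (b.choose j : ℂ) := by
    intro i _
    symm
    apply Finset.sum_subset (Finset.range_subset_range.mpr (by omega))
    intro j _ hnj
    rw [Finset.mem_range] at hnj
    rw [Nat.choose_eq_zero_of_lt (show b < j by omega), Nat.cast_zero, mul_zero]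
  rw [Finset.sum_congr rfl shrinkj]
  symm
  apply Finset.sum_subset (Finset.range_subset_range.mpr (by omega))
  intro i _ hni
  rw [Finset.mem_range] at hni
  apply Finset.sum_eq_zero
  intro j _
  rw [Kc_eq_zero S i j (by omega), mul_zero, mul_zero, zero_mul]

lemma s1_apply0 (n : ℕ) : (Finsupp.single 1 n : Fin 3 →₀ ℕ) 0 = 0 := by
  simp [Finsupp.single_apply]
lemma s1_apply1 (n : ℕ) : (Finsupp.single 1 n : Fin 3 →₀ ℕ) 1 = n := by
  simp
lemma s1_apply2 (n : ℕ) : (Finsupp.single 1 n : Fin 3 →₀ ℕ) 2 = 0 := by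
  simp [Finsupp.single_apply]

lemma Kc_via_coeff (S i j : ℕ) (hi : i ≤ S) (hj : j ≤ S) :
    Kc S i j = coeff (R := ℂ) (Finsupp.single 1 (S - i)) ((1 - X 1) ^ j * G 1 ^ (i + 1)) := by
  rw [Qcoeff, s1_apply0, s1_apply1, s1_apply2, if_pos ⟨rfl, rfl⟩]
  unfold Kc
  apply Finset.sum_congr rfl
  intro t ht
  rw [Finset.mem_range] at ht
  congr 1
  by_cases h : t ≤ S - i
  · rw [if_pos h]
    congr 2
    omega
  · rw [if_neg h, Nat.choose_eq_zero_of_lt (show S - t < i by omega), Nat.cast_zero]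

lemma Kc_closed (S i j : ℕ) (hi : i ≤ S) (hj : j ≤ S) :
    Kc S i j = if j ≤ i then (((S - j).choose (i - j) : ℕ) : ℂ) else 0 := by
  rw [Kc_via_coeff S i j hi hj]
  by_cases h : j ≤ i
  · rw [if_pos h]
    have hfac : (1 - X 1 : MvPowerSeries (Fin 3) ℂ) ^ j * G 1 ^ (i + 1)
        = G 1 ^ ((i - j) + 1) := by
      have he : i + 1 = j + ((i - j) + 1) := by omega
      rw [he, pow_add, ← mul_assoc, ← mul_pow, one_sub_X_mul_G, one_pow, one_mul]
    rw [hfac, coeff_G_pow, if_pos]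
    · rw [s1_apply1]
      congr 2
      omega
    · intro l hl
      fin_cases l
      · exact s1_apply0 _
      · simp at hl
      · exact s1_apply2 _
  · rw [if_neg h]
    have hfac : (1 - X 1 : MvPowerSeries (Fin 3) ℂ) ^ j * G 1 ^ (i + 1)
        = (1 - X 1) ^ (j - (i + 1)) := by
      have he : j = (j - (i + 1)) + (i + 1) := by omega
      conv_lhs => rw [he]
      rw [pow_add, mul_assoc, ← mul_pow, one_sub_X_mul_G, one_pow, mul_one]
    rw [hfac, one_sub_pow_c, map_sum]
    apply Finset.sum_eq_zero
    intro t ht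
    rw [Finset.mem_range] at ht
    rw [coeff_smul, X_pow_eq, coeff_monomial, if_neg, mul_zero]
    intro he
    have := DFunLike.congr_fun he 1
    rw [s1_apply1, Finsupp.single_eq_same] at this
    omega

lemma KcFact (S i j : ℕ) (hi : i ≤ S) (hj : j ≤ S) :
    Kc S i j * ((i.factorial * (S - i).factorial : ℕ) : ℂ) =
      ((i.choose j : ℕ) : ℂ) * ((j.factorial * (S - j).factorial : ℕ) : ℂ) := by
  rw [Kc_closed S i j hi hj]
  by_cases h : j ≤ i
  · rw [if_pos h, ← Nat.cast_mul, ← Nat.cast_mul]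
    congr 1
    have key : ((S - j).choose (i - j)) * ((i - j).factorial * (S - i).factorial)
        = (S - j).factorial := by
      have hk := Nat.choose_mul_factorial_mul_factorial (show i - j ≤ S - j by omega)
      rw [show S - j - (i - j) = S - i by omega] at hk
      rw [← hk]; ring
    have key2 : (i.choose j) * (j.factorial * (i - j).factorial) = i.factorial := by
      have hk := Nat.choose_mul_factorial_mul_factorial h
      rw [← hk]; ring
    apply Nat.eq_of_mul_eq_mul_right (Nat.factorial_pos (i - j))
    calc (S - j).choose (i - j) * (i.factorial * (S - i).factorial) * (i - j).factorial
        = ((S - j).choose (i - j) * ((i - j).factorial * (S - i).factorial)) * i.factorial := by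
          ring
      _ = (S - j).factorial * i.factorial := by rw [key]
      _ = (i.choose j * (j.factorial * (i - j).factorial)) * (S - j).factorial := by
          rw [key2]; ring
      _ = i.choose j * (j.factorial * (S - j).factorial) * (i - j).factorial := by ring
  · rw [if_neg h, Nat.choose_eq_zero_of_lt (by omega), Nat.cast_zero, zero_mul, zero_mul]

lemma alt_sum (n : ℕ) :
    ∑ k ∈ Finset.range (n + 1), (-1 : ℂ) ^ k * (n.choose k : ℂ) =
      if n = 0 then 1 else 0 := by
  have h := add_pow (-1 : ℂ) 1 n
  rw [neg_add_cancel, zero_pow_eq] at h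
  rw [h]
  apply Finset.sum_congr rfl
  intro k _
  rw [one_pow, mul_one]

lemma inv_core (N a b : ℕ) (hb : b ≤ N) :
    ∑ i ∈ Finset.range (N + 1), (-1 : ℂ) ^ (i + a) * (i.choose a : ℂ) * (b.choose i : ℂ) =
      if a = b then 1 else 0 := by
  by_cases hab : a ≤ b
  · have h1 : ∑ i ∈ Finset.range (N + 1),
        (-1 : ℂ) ^ (i + a) * (i.choose a : ℂ) * (b.choose i : ℂ) =
        ∑ i ∈ Finset.Ico a (b + 1),
          (-1 : ℂ) ^ (i + a) * (i.choose a : ℂ) * (b.choose i : ℂ) := by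
      symm
      apply Finset.sum_subset
      · intro x hx
        rw [Finset.mem_Ico] at hx
        rw [Finset.mem_range]
        omega
      · intro x _ hx
        rw [Finset.mem_Ico] at hx
        by_cases hxa : x < a
        · rw [Nat.choose_eq_zero_of_lt hxa, Nat.cast_zero, mul_zero, zero_mul]
        · rw [Nat.choose_eq_zero_of_lt (show b < x by omega), Nat.cast_zero, mul_zero]
    rw [h1, Finset.sum_Ico_eq_sum_range]
    have h2 : ∀ k ∈ Finset.range (b + 1 - a),
        (-1 : ℂ) ^ (a + k + a) * ((a + k).choose a : ℂ) * (b.choose (a + k) : ℂ) =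
        (b.choose a : ℂ) * ((-1 : ℂ) ^ k * ((b - a).choose k : ℂ)) := by
      intro k hk
      rw [Finset.mem_range] at hk
      have hsign : (-1 : ℂ) ^ (a + k + a) = (-1 : ℂ) ^ k := by
        rw [show a + k + a = k + 2 * a by omega, pow_add, pow_mul, neg_one_sq, one_pow, mul_one]
      have hch : b.choose (a + k) * (a + k).choose a = b.choose a * (b - a).choose k := by
        have := Nat.choose_mul (n := b) (show a ≤ a + k by omega)
        rwa [Nat.add_sub_cancel_left] at this
      rw [hsign]
      have : ((a + k).choose a : ℂ) * (b.choose (a + k) : ℂ)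
          = (b.choose a : ℂ) * ((b - a).choose k : ℂ) := by
        rw [← Nat.cast_mul, ← Nat.cast_mul, mul_comm ((a + k).choose a), hch]
      calc (-1 : ℂ) ^ k * ((a + k).choose a : ℂ) * (b.choose (a + k) : ℂ)
          = (-1 : ℂ) ^ k * (((a + k).choose a : ℂ) * (b.choose (a + k) : ℂ)) := by ring
        _ = (-1 : ℂ) ^ k * ((b.choose a : ℂ) * ((b - a).choose k : ℂ)) := by rw [this]
        _ = (b.choose a : ℂ) * ((-1 : ℂ) ^ k * ((b - a).choose k : ℂ)) := by ring
    rw [Finset.sum_congr rfl h2, ← Finset.mul_sum]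
    rw [show b + 1 - a = (b - a) + 1 by omega, alt_sum]
    by_cases he : a = b
    · rw [if_pos he, if_pos (by omega), he, Nat.choose_self, Nat.cast_one, mul_one]
    · rw [if_neg he, if_neg (by omega), mul_zero]
  · rw [if_neg (by omega)]
    apply Finset.sum_eq_zero
    intro i _
    by_cases hia : i < a
    · rw [Nat.choose_eq_zero_of_lt hia, Nat.cast_zero, mul_zero, zero_mul]
    · rw [Nat.choose_eq_zero_of_lt (show b < i by omega), Nat.cast_zero, mul_zero]

lemma map_one_C {n : ℕ} :
    ((1 : Matrix (Fin n) (Fin n) ℂ).map Polynomial.C) = 1 :=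
  Matrix.map_one _ (by simp) (by simp)

lemma charpoly_conj_mat {n : ℕ} (A P Q : Matrix (Fin n) (Fin n) ℂ) (h : P * Q = 1) :
    (P * A * Q).charpoly = A.charpoly := by
  have hmap : (P.map Polynomial.C) * (Q.map Polynomial.C) = 1 := by
    rw [← Matrix.map_mul, h, map_one_C]
  have hch : Matrix.charmatrix (P * A * Q) =
      P.map Polynomial.C * Matrix.charmatrix A * Q.map Polynomial.C := by
    unfold Matrix.charmatrix
    rw [Matrix.mul_sub, Matrix.sub_mul]
    congr 1
    · have hc := Matrix.scalar_commute (Polynomial.X : Polynomial ℂ)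
        (fun r' => mul_comm _ r') (P.map Polynomial.C)
      rw [← hc, mul_assoc, hmap, mul_one]
    · simp only [RingHom.mapMatrix_apply] at *
      rw [← Matrix.map_mul, ← Matrix.map_mul]
  unfold Matrix.charpoly
  rw [hch, Matrix.det_mul, Matrix.det_mul]
  have hd : (P.map Polynomial.C).det * (Q.map Polynomial.C).det = 1 := by
    rw [← Matrix.det_mul, hmap, Matrix.det_one]
  calc (P.map Polynomial.C).det * (Matrix.charmatrix A).det * (Q.map Polynomial.C).det
      = (Matrix.charmatrix A).det *
        ((P.map Polynomial.C).det * (Q.map Polynomial.C).det) := by ring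
    _ = (Matrix.charmatrix A).det := by rw [hd, mul_one]

open Matrix in
lemma charpoly_transpose_mat {n : ℕ} (A : Matrix (Fin n) (Fin n) ℂ) :
    Aᵀ.charpoly = A.charpoly := by
  unfold Matrix.charpoly
  have : Matrix.charmatrix Aᵀ = (Matrix.charmatrix A)ᵀ := by
    unfold Matrix.charmatrix
    rw [Matrix.transpose_sub]
    simp only [RingHom.mapMatrix_apply]
    rw [Matrix.transpose_map, Matrix.scalar_apply, Matrix.diagonal_transpose]
  rw [this, Matrix.det_transpose]

noncomputable def Pmm (S : ℕ) : Matrix (Fin (S + 1)) (Fin (S + 1)) ℂ :=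
  fun a i => (-1 : ℂ) ^ ((i : ℕ) + (a : ℕ)) * ((i : ℕ).choose (a : ℕ) : ℂ)

noncomputable def Ymm (S : ℕ) : Matrix (Fin (S + 1)) (Fin (S + 1)) ℂ :=
  fun j b => ((b : ℕ).choose (j : ℕ) : ℂ)

noncomputable def Mmm (H : MvPowerSeries (Fin 2) ℂ) (S : ℕ) :
    Matrix (Fin (S + 1)) (Fin (S + 1)) ℂ :=
  fun i j => hcoeff H (i : ℕ) (j : ℕ) * Kc S (i : ℕ) (j : ℕ)

noncomputable def dvec (S : ℕ) : Fin (S + 1) → ℂ :=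
  fun i => (((i : ℕ).factorial * (S - (i : ℕ)).factorial : ℕ) : ℂ)

lemma dvec_ne_zero (S : ℕ) (i : Fin (S + 1)) : dvec S i ≠ 0 :=
  Nat.cast_ne_zero.mpr (Nat.mul_ne_zero (Nat.factorial_ne_zero _) (Nat.factorial_ne_zero _))

noncomputable def Dmm (S : ℕ) : Matrix (Fin (S + 1)) (Fin (S + 1)) ℂ :=
  Matrix.diagonal (dvec S)

noncomputable def Emm (S : ℕ) : Matrix (Fin (S + 1)) (Fin (S + 1)) ℂ :=
  Matrix.diagonal (fun i => (dvec S i)⁻¹)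

noncomputable def Tmm (H : MvPowerSeries (Fin 2) ℂ) (S : ℕ) :
    Matrix (Fin (S + 1)) (Fin (S + 1)) ℂ :=
  Matrix.of (fun a b : Fin (S + 1) =>
    ((a : ℕ).choose (b : ℕ) : ℂ) * hcoeff H (a : ℕ) (b : ℕ))

lemma RS_decomp (H : MvPowerSeries (Fin 2) ℂ) (S : ℕ) :
    RSmat H S = Pmm S * Mmm H S * Ymm S := by
  ext a b
  have hentry : RSmat H S a b =
      ∑ i ∈ Finset.range (S + 1), ∑ j ∈ Finset.range (S + 1),
        ((-1 : ℂ) ^ (i + (a : ℕ)) * (i.choose (a : ℕ) : ℂ)) * (hcoeff H i j * Kc S i j) *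
          ((b : ℕ).choose j : ℂ) := by
    rw [show RSmat H S a b
        = coeff (R := ℂ) (mof (a : ℕ) (S - (a : ℕ)) (b : ℕ)) (FofH H) from rfl]
    exact Rentry H S (a : ℕ) (b : ℕ) (Nat.lt_succ_iff.mp a.isLt) (Nat.lt_succ_iff.mp b.isLt)
  rw [hentry, Finset.sum_comm, Matrix.mul_apply]
  simp_rw [Matrix.mul_apply, Finset.sum_mul]
  rw [← Fin.sum_univ_eq_sum_range (fun j => ∑ i ∈ Finset.range (S + 1),
    ((-1 : ℂ) ^ (i + (a : ℕ)) * (i.choose (a : ℕ) : ℂ)) * (hcoeff H i j * Kc S i j) *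
      ((b : ℕ).choose j : ℂ)) (S + 1)]
  apply Finset.sum_congr rfl
  intro j _
  rw [← Fin.sum_univ_eq_sum_range (fun i =>
    ((-1 : ℂ) ^ (i + (a : ℕ)) * (i.choose (a : ℕ) : ℂ)) *
      (hcoeff H i (j : ℕ) * Kc S i (j : ℕ)) * ((b : ℕ).choose (j : ℕ) : ℂ)) (S + 1)]
  apply Finset.sum_congr rfl
  intro i _
  unfold Pmm Mmm Ymm
  ring

lemma PY_one (S : ℕ) : Pmm S * Ymm S = 1 := by
  ext a b
  rw [Matrix.mul_apply, Matrix.one_apply]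
  unfold Pmm Ymm
  have e1 : ∀ (F : ℕ → ℂ), ∑ i ∈ Finset.range (S + 1), F i = ∑ i : Fin (S + 1), F (i : ℕ) :=
    fun F => (Fin.sum_univ_eq_sum_range F (S + 1)).symm
  rw [← e1 (fun i => (-1 : ℂ) ^ (i + (a : ℕ)) * (i.choose (a : ℕ) : ℂ) *
    ((b : ℕ).choose i : ℂ))]
  rw [inv_core S (a : ℕ) (b : ℕ) (Nat.lt_succ_iff.mp b.isLt)]
  by_cases h : a = b
  · rw [if_pos (by rw [h]), if_pos h]
  · rw [if_neg (fun hh => h (Fin.ext hh)), if_neg h]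

lemma ED_one (S : ℕ) : Emm S * Dmm S = 1 := by
  unfold Emm Dmm
  rw [Matrix.diagonal_mul_diagonal]
  have : (fun i => (dvec S i)⁻¹ * dvec S i) = fun _ => (1 : ℂ) := by
    funext i
    rw [inv_mul_cancel₀ (dvec_ne_zero S i)]
  rw [this, Matrix.diagonal_one]

lemma M_decomp (H : MvPowerSeries (Fin 2) ℂ) (S : ℕ) :
    Mmm H S = Emm S * Tmm H S * Dmm S := by
  ext i j
  unfold Emm Dmm
  rw [Matrix.mul_diagonal, Matrix.diagonal_mul]
  unfold Mmm Tmm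
  have hk := KcFact S (i : ℕ) (j : ℕ) (Nat.lt_succ_iff.mp i.isLt) (Nat.lt_succ_iff.mp j.isLt)
  have hdi := dvec_ne_zero S i
  rw [Matrix.of_apply]
  field_simp
  rw [show hcoeff H (i : ℕ) (j : ℕ) * Kc S (i : ℕ) (j : ℕ) * dvec S i
      = hcoeff H (i : ℕ) (j : ℕ) * (Kc S (i : ℕ) (j : ℕ) * dvec S i) by ring]
  unfold dvec
  rw [hk]
  ring

open Matrix in
lemma T_charpoly (H : MvPowerSeries (Fin 2) ℂ) (S : ℕ) :
    (Tmm H S).charpoly =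
      ∏ n : Fin (S + 1), (Polynomial.X - Polynomial.C (hcoeff H (n : ℕ) (n : ℕ))) := by
  rw [← charpoly_transpose_mat]
  rw [Matrix.charpoly_of_upperTriangular (Tmm H S)ᵀ]
  · apply Finset.prod_congr rfl
    intro x _
    rw [Matrix.transpose_apply]
    unfold Tmm
    rw [Matrix.of_apply, Nat.choose_self, Nat.cast_one, one_mul]
  · intro i j hij
    rw [Matrix.transpose_apply]
    unfold Tmm
    rw [Matrix.of_apply, Nat.choose_eq_zero_of_lt (show (j : ℕ) < (i : ℕ) from hij),
      Nat.cast_zero, zero_mul]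

end Aux

/-- If `F` arises from `H`, then `R_S` is conjugate to the triangular matrix with entries
`C(a,b) h_{ab}` and its eigenvalues (with multiplicity) are exactly `e_n = [xⁿ yⁿ] H` for
`0 ≤ n ≤ S`, i.e. its characteristic polynomial is `∏_{n=0}^S (λ - e_n)`. -/
theorem RS_eigenvalues (H : MvPowerSeries (Fin 2) ℂ) (S : ℕ) :
    (∃ P : Matrix (Fin (S + 1)) (Fin (S + 1)) ℂ, IsUnit P.det ∧
        RSmat H S = P * Matrix.of (fun a b : Fin (S + 1) =>
          ((a : ℕ).choose (b : ℕ) : ℂ) * hcoeff H (a : ℕ) (b : ℕ)) * P⁻¹) ∧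
      (RSmat H S).charpoly =
        ∏ n : Fin (S + 1), (Polynomial.X - Polynomial.C (hcoeff H (n : ℕ) (n : ℕ))) := by
  have hPinv : (Pmm S * Emm S) * (Dmm S * Ymm S) = 1 := by
    calc (Pmm S * Emm S) * (Dmm S * Ymm S)
        = Pmm S * ((Emm S * Dmm S) * Ymm S) := by
          simp only [Matrix.mul_assoc]
      _ = Pmm S * Ymm S := by rw [ED_one S, Matrix.one_mul]
      _ = 1 := PY_one S
  have hRS : RSmat H S = (Pmm S * Emm S) * Tmm H S * (Dmm S * Ymm S) := by
    rw [RS_decomp H S, M_decomp H S]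
    simp only [Matrix.mul_assoc]
  have hinv : (Pmm S * Emm S)⁻¹ = Dmm S * Ymm S := Matrix.inv_eq_right_inv hPinv
  constructor
  · refine ⟨Pmm S * Emm S, Matrix.isUnit_det_of_right_inverse hPinv, ?_⟩
    rw [hinv]
    exact hRS
  · rw [hRS, charpoly_conj_mat _ _ _ hPinv, T_charpoly]
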